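/- arXiv:2503.00895 — 4 statements merged into one kernel-verified Lean document; each statement's English description precedes it below -/
import Mathlib

section
/- For any n×n real matrix A = (a_{ij}) and any 1 ≤ k ≤ n, the symmetry identity Σ_l σ_k^{il}(A) a_{jl} = Σ_l σ_k^{lj}(A) a_{li} holds for all indices i, j. -/
/-- `σ_k(A)`: the sum of the `k × k` principal minors of the matrix `A`. -/
noncomputable def sigmaMat (n k : ℕ) (A : Matrix (Fin n) (Fin n) ℝ) : ℝ :=
  ∑ s ∈ Finset.univ.powersetCard k,
    (A.submatrix (fun i : {x : Fin n // x ∈ s} => i.1) (fun j : {x : Fin n // x ∈ s} => j.1)).det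

/-- `σ_k^{ij}(A) = ∂σ_k(A)/∂a_{ij}`. -/
noncomputable def sigmaDeriv (n k : ℕ) (A : Matrix (Fin n) (Fin n) ℝ) (i j : Fin n) : ℝ :=
  deriv (fun t : ℝ => sigmaMat n k (A + t • Matrix.single i j 1)) 0

open Matrix Finset Polynomial

variable {n : ℕ}

noncomputable def gMat (B : Matrix (Fin n) (Fin n) ℝ) (S : Finset (Fin n)) :
    Matrix (Fin n) (Fin n) ℝ :=
  Matrix.of fun a b => if a ∈ S then (Pi.single a 1 : Fin n → ℝ) b else B a b

def complEquiv (S : Finset (Fin n)) : {x : Fin n // x ∈ S} ⊕ {x : Fin n // x ∈ Sᶜ} ≃ Fin n :=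
  (Equiv.sumCongr (Equiv.refl _) (Equiv.subtypeEquivRight (fun x => Finset.mem_compl))).trans
    (Equiv.sumCompl (· ∈ S))

lemma L2 (B : Matrix (Fin n) (Fin n) ℝ) (S : Finset (Fin n)) :
    (gMat B S).det = (B.submatrix (fun i : {x : Fin n // x ∈ Sᶜ} => i.1)
      (fun j : {x : Fin n // x ∈ Sᶜ} => j.1)).det := by
  classical
  rw [← Matrix.det_submatrix_equiv_self (complEquiv S) (gMat B S)]
  have : (gMat B S).submatrix (complEquiv S) (complEquiv S) =
      Matrix.fromBlocks 1 0
        (B.submatrix (fun i : {x : Fin n // x ∈ Sᶜ} => i.1) (fun j : {x : Fin n // x ∈ S} => j.1))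
        (B.submatrix (fun i : {x : Fin n // x ∈ Sᶜ} => i.1) (fun j : {x : Fin n // x ∈ Sᶜ} => j.1)) := by
    ext a b
    cases a with
    | inl a =>
      cases b with
      | inl b =>
        simp [complEquiv, gMat, a.2, Matrix.one_apply, Pi.single_apply, @eq_comm _ b a]
      | inr b =>
        have hb : b.1 ∉ S := Finset.mem_compl.mp b.2
        have hne : b.1 ≠ a.1 := fun h => hb (h ▸ a.2)
        simp [complEquiv, gMat, a.2, Pi.single_apply, hne]
    | inr a =>
      have ha : a.1 ∉ S := Finset.mem_compl.mp a.2
      cases b with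
      | inl b => simp [complEquiv, gMat, ha]
      | inr b => simp [complEquiv, gMat, ha]
  rw [this, Matrix.det_fromBlocks_zero₁₂, Matrix.det_one, one_mul]

noncomputable def pertMat (B : Matrix (Fin n) (Fin n) ℝ) (U : Finset (Fin n)) (t : ℝ) :
    Matrix (Fin n) (Fin n) ℝ :=
  Matrix.of fun a b => if a ∈ U then B a b + t * (Pi.single a 1 : Fin n → ℝ) b else B a b

lemma L1 (t : ℝ) (U : Finset (Fin n)) :
    ∀ B : Matrix (Fin n) (Fin n) ℝ,
      (pertMat B U t).det = ∑ S ∈ U.powerset, t ^ S.card * (gMat B S).det := by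
  classical
  induction U using Finset.induction_on with
  | empty =>
    intro B
    have h1 : pertMat B ∅ t = B := by ext a b; simp [pertMat]
    have h2 : gMat B ∅ = B := by ext a b; simp [gMat]
    simp [h1, h2]
  | insert _ _ hr ih =>
    rename_i r U
    intro B
    have hM : pertMat B (insert r U) t
        = (pertMat B U t).updateRow r (fun b => B r b + t * (Pi.single r 1 : Fin n → ℝ) b) := by
      ext a b
      by_cases hab : a = r
      · subst hab; simp [pertMat, hr]
      · simp [pertMat, Matrix.updateRow_ne hab, Finset.mem_insert, hab]
    have hrow : (pertMat B U t) r = B r := by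
      ext b; simp [pertMat, hr]
    have h2 : (pertMat B U t).updateRow r (Pi.single r 1)
        = pertMat (B.updateRow r (Pi.single r 1)) U t := by
      ext a b
      by_cases hab : a = r
      · subst hab; simp [pertMat, hr]
      · simp [pertMat, Matrix.updateRow_ne hab]
    have h3 : ∀ S ∈ U.powerset, gMat (B.updateRow r (Pi.single r 1)) S = gMat B (insert r S) := by
      intro S hS
      have hrS : r ∉ S := fun h => hr (Finset.mem_powerset.mp hS h)
      ext a b
      by_cases hab : a = r
      · subst hab; simp [gMat, hrS]
      · by_cases haS : a ∈ S
        · simp [gMat, haS, Finset.mem_insert, hab]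
        · simp [gMat, haS, Finset.mem_insert, hab, Matrix.updateRow_ne hab]
    have e0 : (fun b => B r b + t * (Pi.single r 1 : Fin n → ℝ) b)
        = B r + t • (Pi.single r 1 : Fin n → ℝ) := by ext b; simp
    rw [hM, e0, Matrix.det_updateRow_add]
    have e1 : (pertMat B U t).updateRow r (B r) = pertMat B U t := by
      rw [← hrow, Matrix.updateRow_eq_self]
    rw [e1, Matrix.det_updateRow_smul, h2, ih, ih, Finset.sum_powerset_insert hr]
    rw [Finset.mul_sum]
    congr 1
    refine Finset.sum_congr rfl fun S hS => ?_
    have hrS : r ∉ S := fun h => hr (Finset.mem_powerset.mp hS h)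
    rw [h3 S hS, Finset.card_insert_of_notMem hrS, pow_succ]
    ring

noncomputable def Dmat (n k : ℕ) (A : Matrix (Fin n) (Fin n) ℝ) (p q : Fin n) : ℝ :=
  ∑ S ∈ (Finset.univ.powersetCard k).filter (p ∈ ·),
    (((A.updateRow p (Pi.single q 1)).submatrix
      (fun i : {x : Fin n // x ∈ S} => i.1) (fun j : {x : Fin n // x ∈ S} => j.1)).det)

lemma sigmaMat_add (k : ℕ) (A : Matrix (Fin n) (Fin n) ℝ) (p q : Fin n) (s : ℝ) :
    sigmaMat n k (A + s • Matrix.single p q 1)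
      = sigmaMat n k A + s * Dmat n k A p q := by
  classical
  unfold sigmaMat Dmat
  have key : ∀ S ∈ Finset.univ.powersetCard k,
      ((A + s • Matrix.single p q 1).submatrix
        (fun i : {x : Fin n // x ∈ S} => i.1) (fun j : {x : Fin n // x ∈ S} => j.1)).det
      = (A.submatrix (fun i : {x : Fin n // x ∈ S} => i.1)
          (fun j : {x : Fin n // x ∈ S} => j.1)).det
        + s * (if p ∈ S then (((A.updateRow p (Pi.single q 1)).submatrix
            (fun i : {x : Fin n // x ∈ S} => i.1) (fun j : {x : Fin n // x ∈ S} => j.1)).det)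
          else 0) := by
    intro S _
    by_cases hp : p ∈ S
    · simp only [hp, if_true]
      set M := A.submatrix (fun i : {x : Fin n // x ∈ S} => i.1)
        (fun j : {x : Fin n // x ∈ S} => j.1) with hM
      set rp : {x : Fin n // x ∈ S} := ⟨p, hp⟩ with hrp
      have step1 : (A + s • Matrix.single p q 1).submatrix
          (fun i : {x : Fin n // x ∈ S} => i.1) (fun j : {x : Fin n // x ∈ S} => j.1)
          = M.updateRow rp (M rp + s • fun j : {x : Fin n // x ∈ S} =>
              (Pi.single q 1 : Fin n → ℝ) j.1) := by
        ext a b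
        by_cases hap : a = rp
        · subst hap
          simp [M, Matrix.single, Pi.single_apply, eq_comm, hrp]
        · have hap' : a.1 ≠ p := fun h => hap (Subtype.ext h)
          rw [Matrix.updateRow_ne hap]
          simp [M, Matrix.single, Ne.symm hap']
      have step3 : M.updateRow rp (fun j : {x : Fin n // x ∈ S} =>
            (Pi.single q 1 : Fin n → ℝ) j.1)
          = (A.updateRow p (Pi.single q 1)).submatrix
              (fun i : {x : Fin n // x ∈ S} => i.1) (fun j : {x : Fin n // x ∈ S} => j.1) := by
        ext a b
        by_cases hap : a = rp
        · subst hap; simp [hrp]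
        · have hap' : a.1 ≠ p := fun h => hap (Subtype.ext h)
          rw [Matrix.updateRow_ne hap]
          simp [M, Matrix.updateRow_ne hap']
      rw [step1, Matrix.det_updateRow_add, Matrix.updateRow_eq_self, Matrix.det_updateRow_smul,
        step3]
    · simp only [hp, if_false, mul_zero, add_zero]
      congr 1
      ext a b
      have hap : a.1 ≠ p := fun h => hp (h ▸ a.2)
      simp [Matrix.single, Ne.symm hap]
  rw [Finset.sum_congr rfl key, Finset.sum_add_distrib, ← Finset.mul_sum,
    ← Finset.sum_filter]

lemma adj_eq (A : Matrix (Fin n) (Fin n) ℝ) (p q : Fin n) (t : ℝ) :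
    Matrix.adjugate (A + t • (1 : Matrix (Fin n) (Fin n) ℝ)) q p
      = ∑ k ∈ Finset.range (n + 1), t ^ (n - k) * Dmat n k A p q := by
  classical
  set B := A.updateRow p (Pi.single q 1) with hB
  set m : Finset (Fin n) → ℝ := fun T =>
    (B.submatrix (fun i : {x : Fin n // x ∈ T} => i.1) (fun j : {x : Fin n // x ∈ T} => j.1)).det
    with hm
  set U : Finset (Fin n) := Finset.univ.erase p with hU
  rw [Matrix.adjugate_apply]
  have hpert : (A + t • (1 : Matrix (Fin n) (Fin n) ℝ)).updateRow p (Pi.single q 1)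
      = pertMat B U t := by
    ext a b
    by_cases hap : a = p
    · subst hap
      simp [pertMat, hU, B]
    · have haU : a ∈ U := Finset.mem_erase.mpr ⟨hap, Finset.mem_univ a⟩
      rw [Matrix.updateRow_ne hap]
      simp [pertMat, haU, B, Matrix.updateRow_ne hap, Matrix.one_apply, Pi.single_apply, eq_comm]
  rw [hpert, L1 t U B]
  -- rewrite each term via L2
  have hL : ∑ S ∈ U.powerset, t ^ S.card * (gMat B S).det
      = ∑ S ∈ U.powerset, t ^ S.card * m Sᶜ :=
    Finset.sum_congr rfl fun S _ => by rw [L2]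
  rw [hL]
  -- rewrite RHS
  have hDk : ∀ k, Dmat n k A p q = ∑ T ∈ (Finset.univ.powersetCard k).filter (p ∈ ·), m T := fun k => rfl
  have hR : ∀ k ∈ Finset.range (n + 1),
      t ^ (n - k) * Dmat n k A p q
        = ∑ T ∈ Finset.univ.powersetCard k,
            (if p ∈ T then t ^ (n - T.card) * m T else 0) := by
    intro k _
    rw [hDk, Finset.sum_filter, Finset.mul_sum]
    refine Finset.sum_congr rfl fun T hT => ?_
    have hcard : T.card = k := (Finset.mem_powersetCard.mp hT).2
    rw [hcard]
    by_cases hp : p ∈ T <;> simp [hp]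
  rw [Finset.sum_congr rfl hR]
  have hpow : ∑ k ∈ Finset.range (n + 1), ∑ T ∈ Finset.univ.powersetCard k,
        (if p ∈ T then t ^ (n - T.card) * m T else 0)
      = ∑ T ∈ (Finset.univ : Finset (Fin n)).powerset,
        (if p ∈ T then t ^ (n - T.card) * m T else 0) := by
    rw [Finset.sum_powerset]
    simp
  rw [hpow, ← Finset.sum_filter]
  refine Finset.sum_nbij' (fun S => Sᶜ) (fun T => Tᶜ) ?_ ?_ ?_ ?_ ?_
  · intro S hS
    have hpS : p ∉ S := fun h => (Finset.mem_erase.mp (Finset.mem_powerset.mp hS h)).1 rfl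
    simp [Finset.mem_filter, Finset.mem_compl, hpS]
  · intro T hT
    have hpT : p ∈ T := (Finset.mem_filter.mp hT).2
    refine Finset.mem_powerset.mpr fun x hx => Finset.mem_erase.mpr ⟨?_, Finset.mem_univ x⟩
    exact fun h => (Finset.mem_compl.mp hx) (h ▸ hpT)
  · intro S _; simp
  · intro T _; simp
  · intro S hS
    have hc : Sᶜ.card = n - S.card := by
      rw [Finset.card_compl]
      simp
    have hle : S.card ≤ n := by
      simpa using Finset.card_le_card (Finset.mem_powerset.mp hS |>.trans (Finset.subset_univ U))
    rw [hc, Nat.sub_sub_self hle]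

lemma sigmaDeriv'_eq (k : ℕ) (A : Matrix (Fin n) (Fin n) ℝ) (p q : Fin n) :
    deriv (fun t : ℝ => sigmaMat n k (A + t • Matrix.single p q 1)) 0
      = Dmat n k A p q := by
  have hfun : (fun t : ℝ => sigmaMat n k (A + t • Matrix.single p q 1))
      = fun t : ℝ => sigmaMat n k A + t * Dmat n k A p q :=
    funext fun t => sigmaMat_add k A p q t
  rw [hfun]
  have hd : HasDerivAt (fun t : ℝ => sigmaMat n k A + t * Dmat n k A p q)
      (Dmat n k A p q) 0 := by
    simpa using ((hasDerivAt_id (0 : ℝ)).mul_const (Dmat n k A p q)).const_add (sigmaMat n k A)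
  exact hd.deriv

noncomputable def Pp (n : ℕ) (A : Matrix (Fin n) (Fin n) ℝ) (p q : Fin n) : Polynomial ℝ :=
  ∑ k ∈ Finset.range (n + 1), Polynomial.C (Dmat n k A p q) * Polynomial.X ^ (n - k)

lemma eval_Pp (A : Matrix (Fin n) (Fin n) ℝ) (p q : Fin n) (t : ℝ) :
    (Pp n A p q).eval t = Matrix.adjugate (A + t • (1 : Matrix (Fin n) (Fin n) ℝ)) q p := by
  rw [adj_eq, Pp, Polynomial.eval_finset_sum]
  exact Finset.sum_congr rfl fun k _ => by
    rw [Polynomial.eval_mul, Polynomial.eval_C, Polynomial.eval_pow, Polynomial.eval_X, mul_comm]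

lemma coeff_Pp (A : Matrix (Fin n) (Fin n) ℝ) (p q : Fin n) (k : ℕ) (hk : k ≤ n) :
    (Pp n A p q).coeff (n - k) = Dmat n k A p q := by
  rw [Pp, Polynomial.finset_sum_coeff]
  rw [Finset.sum_eq_single k]
  · simp
  · intro k' hk' hne
    have hk'n : k' ≤ n := by simpa using Nat.lt_succ_iff.mp (Finset.mem_range.mp hk')
    have : n - k ≠ n - k' := by omega
    simp [Polynomial.coeff_X_pow, this]
  · intro h
    exact absurd (Finset.mem_range.mpr (Nat.lt_succ_of_le hk)) h

lemma adj_comm (A : Matrix (Fin n) (Fin n) ℝ) (t : ℝ) :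
    Matrix.adjugate (A + t • (1 : Matrix (Fin n) (Fin n) ℝ)) * A
      = A * Matrix.adjugate (A + t • (1 : Matrix (Fin n) (Fin n) ℝ)) := by
  set M := A + t • (1 : Matrix (Fin n) (Fin n) ℝ) with hM
  have hA : A = M - t • (1 : Matrix (Fin n) (Fin n) ℝ) := by simp [hM]
  rw [hA, Matrix.mul_sub, Matrix.sub_mul, Matrix.adjugate_mul, Matrix.mul_adjugate]
  congr 1
  rw [Matrix.mul_smul, Matrix.smul_mul, Matrix.mul_one, Matrix.one_mul]

lemma Dmat_symm (k : ℕ) (hk : 1 ≤ k) (hkn : k ≤ n) (A : Matrix (Fin n) (Fin n) ℝ)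
    (i j : Fin n) :
    ∑ l, Dmat n k A i l * A j l = ∑ l, Dmat n k A l j * A l i := by
  classical
  set Q1 : Polynomial ℝ := ∑ l, Pp n A l j * Polynomial.C (A l i) with hQ1
  set Q2 : Polynomial ℝ := ∑ l, Polynomial.C (A j l) * Pp n A i l with hQ2
  have heval : ∀ t : ℝ, Q1.eval t = Q2.eval t := by
    intro t
    have h1 : Q1.eval t
        = (Matrix.adjugate (A + t • (1 : Matrix (Fin n) (Fin n) ℝ)) * A) j i := by
      rw [Matrix.mul_apply, hQ1, Polynomial.eval_finset_sum]
      exact Finset.sum_congr rfl fun l _ => by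
        rw [Polynomial.eval_mul, Polynomial.eval_C, eval_Pp]
    have h2 : Q2.eval t
        = (A * Matrix.adjugate (A + t • (1 : Matrix (Fin n) (Fin n) ℝ))) j i := by
      rw [Matrix.mul_apply, hQ2, Polynomial.eval_finset_sum]
      exact Finset.sum_congr rfl fun l _ => by
        rw [Polynomial.eval_mul, Polynomial.eval_C, eval_Pp]
    rw [h1, h2, adj_comm]
  have hQ : Q1 = Q2 := Polynomial.funext heval
  have hc := congrArg (fun P : Polynomial ℝ => P.coeff (n - k)) hQ
  simp only [hQ1, hQ2, Polynomial.finset_sum_coeff, Polynomial.coeff_mul_C,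
    Polynomial.coeff_C_mul, coeff_Pp A _ _ k hkn] at hc
  calc ∑ l, Dmat n k A i l * A j l = ∑ l, A j l * Dmat n k A i l := by
        exact Finset.sum_congr rfl fun l _ => mul_comm _ _
    _ = ∑ l, Dmat n k A l j * A l i := hc.symm

lemma sigmaDeriv_eq_Dmat (k : ℕ) (A : Matrix (Fin n) (Fin n) ℝ) (p q : Fin n) :
    sigmaDeriv n k A p q = Dmat n k A p q := by
  unfold sigmaDeriv
  exact sigmaDeriv'_eq k A p q

/-- `∑_l σ_k^{il}(A) a_{jl} = ∑_l σ_k^{lj}(A) a_{li}`. -/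
theorem stmt2 (n k : ℕ) (hk : 1 ≤ k) (hkn : k ≤ n) (A : Matrix (Fin n) (Fin n) ℝ)
    (i j : Fin n) :
    ∑ l, sigmaDeriv n k A i l * A j l = ∑ l, sigmaDeriv n k A l j * A l i := by
  simp_rw [sigmaDeriv_eq_Dmat]
  exact Dmat_symm k hk hkn A i j
end

section
/- Let X = (X_1,…,X_n) be a C² vector field on an open set Ω ⊆ ℝⁿ, and let A(x) be the n×n matrix with entries a_{ij} = ∂_j X_i. Then for every 1 ≤ k ≤ n, the matrix (σ_k^{ij}(A)) is divergence-free in its second index: Σ_{j=1}^n ∂_j σ_k^{ij}(A(x)) = 0 for each i and each x ∈ Ω. -/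
open Matrix Finset Function

/-- det as a continuous multilinear map of the rows. -/
noncomputable def detCML (ι : Type*) [Fintype ι] [DecidableEq ι] :
    ContinuousMultilinearMap ℝ (fun _ : ι => ι → ℝ) ℝ where
  toMultilinearMap := (Matrix.detRowAlternating (n := ι) (R := ℝ)).toMultilinearMap
  cont := (continuous_id (X := Matrix ι ι ℝ)).matrix_det

@[simp] lemma detCML_apply {ι : Type*} [Fintype ι] [DecidableEq ι] (v : ι → ι → ℝ) :
    detCML ι v = Matrix.det (Matrix.of v) := rfl

lemma detCML_swap {ι : Type*} [Fintype ι] [DecidableEq ι] (v : ι → ι → ℝ) {a b : ι}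
    (hab : a ≠ b) : detCML ι (v ∘ Equiv.swap a b) = - detCML ι v :=
  Matrix.detRowAlternating.map_swap v hab

variable {n : ℕ}

/-- the `j`-th standard basis row, restricted to the subtype of `s`. -/
def eRow (s : Finset (Fin n)) (j : Fin n) : {x : Fin n // x ∈ s} → ℝ :=
  fun q => if (q : Fin n) = j then 1 else 0

/-- the rows of the principal submatrix of `A` given by `s`. -/
def subRow (s : Finset (Fin n)) (A : Matrix (Fin n) (Fin n) ℝ) :
    {x : Fin n // x ∈ s} → {x : Fin n // x ∈ s} → ℝ :=
  fun p q => A p.1 q.1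

lemma sigmaMat_eq (k : ℕ) (A : Matrix (Fin n) (Fin n) ℝ) :
    sigmaMat n k A = ∑ s ∈ Finset.univ.powersetCard k, detCML _ (subRow s A) := rfl

lemma subRow_add (s : Finset (Fin n)) (A : Matrix (Fin n) (Fin n) ℝ) (i j : Fin n) (t : ℝ) :
    subRow s (A + t • Matrix.single i j 1) =
      if h : i ∈ s then
        Function.update (subRow s A) ⟨i, h⟩ (subRow s A ⟨i, h⟩ + t • eRow s j)
      else subRow s A := by
  split
  · next h =>
    funext p
    rcases eq_or_ne p ⟨i, h⟩ with rfl | hp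
    · rw [Function.update_self]
      funext q
      simp only [subRow, Matrix.add_apply, Matrix.smul_apply, Pi.add_apply, Pi.smul_apply,
        eRow, smul_eq_mul]
      rcases eq_or_ne (q : Fin n) j with rfl | hq
      · simp [Matrix.single_apply_same]
      · rw [Matrix.single_apply_of_ne (h := fun hh : i = i ∧ j = (q : Fin n) => hq hh.2.symm)]
        simp [hq]
    · rw [Function.update_of_ne hp]
      funext q
      have hpi : (p : Fin n) ≠ i := fun hh => hp (Subtype.ext hh)
      simp only [subRow, Matrix.add_apply, Matrix.smul_apply, smul_eq_mul]
      rw [Matrix.single_apply_of_ne (h := fun hh : i = (p : Fin n) ∧ j = (q : Fin n) => hpi hh.1.symm)]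
      simp
  · next h =>
    funext p q
    have hpi : (p : Fin n) ≠ i := fun hh => h (hh ▸ p.2)
    simp only [subRow, Matrix.add_apply, Matrix.smul_apply, smul_eq_mul]
    rw [Matrix.single_apply_of_ne (h := fun hh : i = (p : Fin n) ∧ j = (q : Fin n) => hpi hh.1.symm)]
    simp

lemma hasDerivAt_det_subRow (s : Finset (Fin n)) (A : Matrix (Fin n) (Fin n) ℝ) (i j : Fin n) :
    HasDerivAt (fun t : ℝ => detCML _ (subRow s (A + t • Matrix.single i j 1)))
      (if h : i ∈ s then
        detCML _ (Function.update (subRow s A) ⟨i, h⟩ (eRow s j)) else 0) 0 := by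
  by_cases h : i ∈ s
  · rw [dif_pos h]
    have heq : (fun t : ℝ => detCML _ (subRow s (A + t • Matrix.single i j 1)))
        = fun t : ℝ => detCML _ (subRow s A)
            + t * detCML _ (Function.update (subRow s A) ⟨i, h⟩ (eRow s j)) := by
      funext t
      rw [subRow_add, dif_pos h, ContinuousMultilinearMap.map_update_add,
        ContinuousMultilinearMap.map_update_smul, Function.update_eq_self, smul_eq_mul]
    rw [heq]
    exact (hasDerivAt_mul_const _).const_add _
  · rw [dif_neg h]
    have heq : (fun t : ℝ => detCML _ (subRow s (A + t • Matrix.single i j 1)))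
        = fun _ : ℝ => detCML _ (subRow s A) := by
      funext t; rw [subRow_add, dif_neg h]
    rw [heq]
    exact hasDerivAt_const _ _

lemma sigmaDeriv_eq (k : ℕ) (A : Matrix (Fin n) (Fin n) ℝ) (i j : Fin n) :
    sigmaDeriv n k A i j = ∑ s ∈ Finset.univ.powersetCard k,
      if h : i ∈ s then
        detCML _ (Function.update (subRow s A) ⟨i, h⟩ (eRow s j)) else 0 := by
  have H := HasDerivAt.fun_sum (u := Finset.univ.powersetCard k)
    (fun s _ => hasDerivAt_det_subRow s A i j)
  have hfun : (fun t : ℝ => sigmaMat n k (A + t • Matrix.single i j 1))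
      = fun t : ℝ => ∑ s ∈ Finset.univ.powersetCard k,
          detCML _ (subRow s (A + t • Matrix.single i j 1)) := rfl
  rw [sigmaDeriv, hfun]
  exact H.deriv

lemma cancel (s : Finset (Fin n)) (R : {x : Fin n // x ∈ s} → {x : Fin n // x ∈ s} → ℝ)
    (i₀ p : {x : Fin n // x ∈ s}) (hp : p ≠ i₀)
    (Hv : Fin n → Fin n → ℝ) (hsymm : ∀ b c, Hv b c = Hv c b) :
    ∑ j : Fin n, detCML _ (Function.update (Function.update R i₀ (eRow s j)) p
      (fun q => Hv q.1 j)) = 0 := by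
  classical
  set Dm : Fin n → {x : Fin n // x ∈ s} → ℝ := fun j b =>
    detCML _ (Function.update (Function.update R i₀ (eRow s j)) p (eRow s b.1)) with hDm
  have expand : ∀ j : Fin n, (fun q : {x : Fin n // x ∈ s} => Hv q.1 j)
      = ∑ b : {x : Fin n // x ∈ s}, Hv b.1 j • eRow s b.1 := by
    intro j
    funext q
    rw [Finset.sum_apply]
    rw [Finset.sum_eq_single q]
    · simp [eRow]
    · intro b _ hb
      have hqb : (q : Fin n) ≠ (b : Fin n) := fun hh => hb (Subtype.ext hh.symm)
      simp [eRow, hqb]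
    · exact fun hq => absurd (Finset.mem_univ q) hq
  have step1 : ∀ j : Fin n,
      detCML _ (Function.update (Function.update R i₀ (eRow s j)) p (fun q => Hv q.1 j))
        = ∑ b : {x : Fin n // x ∈ s}, Hv b.1 j * Dm j b := by
    intro j
    rw [expand j]
    rw [show (detCML _ (Function.update (Function.update R i₀ (eRow s j)) p
        (∑ b : {x : Fin n // x ∈ s}, Hv b.1 j • eRow s b.1)))
      = ∑ b : {x : Fin n // x ∈ s}, detCML _ (Function.update (Function.update R i₀ (eRow s j)) p
          (Hv b.1 j • eRow s b.1)) from
      MultilinearMap.map_update_sum (detCML _).toMultilinearMap Finset.univ p _ _]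
    refine Finset.sum_congr rfl fun b _ => ?_
    rw [ContinuousMultilinearMap.map_update_smul, smul_eq_mul]
  rw [Finset.sum_congr rfl fun j (_ : j ∈ Finset.univ) => step1 j]
  have hzero : ∀ j ∉ s, ∀ b : {x : Fin n // x ∈ s}, Dm j b = 0 := by
    intro j hj b
    have h0 : (Function.update (Function.update R i₀ (eRow s j)) p (eRow s b.1)) i₀ = 0 := by
      rw [Function.update_of_ne (Ne.symm hp), Function.update_self]
      funext q
      have : (q : Fin n) ≠ j := fun hh => hj (hh ▸ q.2)
      simp [eRow, this]
    exact (detCML _).toMultilinearMap.map_coord_zero i₀ h0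
  rw [← Finset.sum_subset (Finset.subset_univ s) (fun j _ hj => by
    exact Finset.sum_eq_zero fun b _ => by rw [hzero j hj b, mul_zero])]
  rw [← Finset.sum_coe_sort]
  have anti : ∀ a b : {x : Fin n // x ∈ s}, Dm b.1 a = - Dm a.1 b := by
    intro a b
    have hcomp : Function.update (Function.update R i₀ (eRow s b.1)) p (eRow s a.1)
        = (Function.update (Function.update R i₀ (eRow s a.1)) p (eRow s b.1))
            ∘ Equiv.swap i₀ p := by
      funext r
      rcases eq_or_ne r i₀ with rfl | h1
      · rw [Function.comp_apply, Equiv.swap_apply_left, Function.update_self,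
          Function.update_of_ne (Ne.symm hp), Function.update_self]
      · rcases eq_or_ne r p with rfl | h2
        · rw [Function.comp_apply, Equiv.swap_apply_right, Function.update_self,
            Function.update_of_ne (Ne.symm hp), Function.update_self]
        · rw [Function.comp_apply, Equiv.swap_apply_of_ne_of_ne h1 h2,
            Function.update_of_ne h2, Function.update_of_ne h1,
            Function.update_of_ne h2, Function.update_of_ne h1]
    have e1 : Dm b.1 a
        = detCML _ (Function.update (Function.update R i₀ (eRow s b.1)) p (eRow s a.1)) := rfl
    rw [e1, hcomp]
    exact detCML_swap _ (Ne.symm hp)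
  have key : (∑ a : {x : Fin n // x ∈ s}, ∑ b : {x : Fin n // x ∈ s}, Hv b.1 a.1 * Dm a.1 b)
      = - ∑ a : {x : Fin n // x ∈ s}, ∑ b : {x : Fin n // x ∈ s}, Hv b.1 a.1 * Dm a.1 b := by
    conv_lhs => rw [Finset.sum_comm]
    rw [← Finset.sum_neg_distrib]
    refine Finset.sum_congr rfl fun a _ => ?_
    rw [← Finset.sum_neg_distrib]
    refine Finset.sum_congr rfl fun b _ => ?_
    rw [hsymm, anti, mul_neg]
  linarith [key]

lemma hasFDerivAt_term (s : Finset (Fin n)) (i j : Fin n) (h : i ∈ s)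
    (Af : (Fin n → ℝ) → Matrix (Fin n) (Fin n) ℝ) (x : Fin n → ℝ)
    (L : Fin n → Fin n → ((Fin n → ℝ) →L[ℝ] ℝ))
    (hL : ∀ p q : Fin n, HasFDerivAt (fun y => Af y p q) (L p q) x) :
    HasFDerivAt (fun y => detCML _ (Function.update (subRow s (Af y)) ⟨i, h⟩ (eRow s j)))
      (∑ p' : {x : Fin n // x ∈ s},
        ((detCML _).toContinuousLinearMap
            (Function.update (subRow s (Af x)) ⟨i, h⟩ (eRow s j)) p').comp
          (if p' = ⟨i, h⟩ then 0 else ContinuousLinearMap.pi fun q => L p'.1 q.1)) x := by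
  classical
  have hg : ∀ p' : {x : Fin n // x ∈ s},
      HasFDerivAt (fun y => Function.update (subRow s (Af y)) ⟨i, h⟩ (eRow s j) p')
        (if p' = ⟨i, h⟩ then 0 else ContinuousLinearMap.pi fun q => L p'.1 q.1) x := by
    intro p'
    rcases eq_or_ne p' ⟨i, h⟩ with rfl | hp'
    · simp only [Function.update_self, if_pos rfl]
      exact hasFDerivAt_const _ _
    · have heq : (fun y => Function.update (subRow s (Af y)) ⟨i, h⟩ (eRow s j) p')
          = fun y => (fun q : {x : Fin n // x ∈ s} => Af y p'.1 q.1) := by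
        funext y; rw [Function.update_of_ne hp']; rfl
      rw [heq, if_neg hp']
      exact hasFDerivAt_pi.2 fun q => hL p'.1 q.1
  exact HasFDerivAt.multilinear_comp (detCML _) hg


lemma value_term (s : Finset (Fin n)) (i j : Fin n) (h : i ∈ s)
    (Af : (Fin n → ℝ) → Matrix (Fin n) (Fin n) ℝ) (x : Fin n → ℝ)
    (L : Fin n → Fin n → ((Fin n → ℝ) →L[ℝ] ℝ)) (v : Fin n → ℝ) :
    (∑ p' : {x : Fin n // x ∈ s},
        ((detCML _).toContinuousLinearMap
            (Function.update (subRow s (Af x)) ⟨i, h⟩ (eRow s j)) p').comp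
          (if p' = ⟨i, h⟩ then 0 else ContinuousLinearMap.pi fun q => L p'.1 q.1)) v
      = ∑ p' : {x : Fin n // x ∈ s},
        detCML _ (Function.update (Function.update (subRow s (Af x)) ⟨i, h⟩ (eRow s j)) p'
          (if p' = ⟨i, h⟩ then 0 else fun q => L p'.1 q.1 v)) := by
  classical
  rw [ContinuousLinearMap.sum_apply]
  refine Finset.sum_congr rfl fun p' _ => ?_
  rw [ContinuousLinearMap.comp_apply]
  rcases eq_or_ne p' ⟨i, h⟩ with rfl | hp'
  · rw [if_pos rfl, if_pos rfl]
    rfl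
  · rw [if_neg hp', if_neg hp']
    rfl

/-- if `a_{ij} = ∂_j X_i` for a `C²` vector field `X` on an open set `Ω`,
then `∑_j ∂_j σ_k^{ij}(A(x)) = 0` on `Ω`. -/
theorem stmt3 (n k : ℕ) (hk : 1 ≤ k) (hkn : k ≤ n)
    (Ω : Set (Fin n → ℝ)) (hΩ : IsOpen Ω)
    (X : (Fin n → ℝ) → (Fin n → ℝ)) (hX : ContDiffOn ℝ 2 X Ω)
    (A : (Fin n → ℝ) → Matrix (Fin n) (Fin n) ℝ)
    (hA : ∀ x i j, A x i j = fderiv ℝ X x (Pi.single j 1) i)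
    (x : Fin n → ℝ) (hx : x ∈ Ω) (i : Fin n) :
    ∑ j, fderiv ℝ (fun y => sigmaDeriv n k (A y) i j) x (Pi.single j 1) = 0 := by
  classical
  have hx' : Ω ∈ nhds x := hΩ.mem_nhds hx
  have hF1 : ContDiffOn ℝ 1 (fderiv ℝ X) Ω := hX.fderiv_of_isOpen hΩ (by norm_num)
  have hFd : DifferentiableAt ℝ (fderiv ℝ X) x :=
    (hF1.differentiableOn one_ne_zero).differentiableAt hx'
  have hsym : ∀ v w, fderiv ℝ (fderiv ℝ X) x v w = fderiv ℝ (fderiv ℝ X) x w v :=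
    (hX.contDiffAt hx').isSymmSndFDerivAt (by simp [minSmoothness_of_isRCLikeNormedField])
  set B := fderiv ℝ (fderiv ℝ X) x with hBdef
  set L : Fin n → Fin n → ((Fin n → ℝ) →L[ℝ] ℝ) := fun p q =>
    (((ContinuousLinearMap.proj p).comp
      (ContinuousLinearMap.apply ℝ (Fin n → ℝ) (Pi.single q 1)))).comp B with hLdef
  have hL : ∀ p q : Fin n, HasFDerivAt (fun y => A y p q) (L p q) x := by
    intro p q
    have h1 : (fun y => A y p q) = fun y =>
        ((ContinuousLinearMap.proj p).comp
          (ContinuousLinearMap.apply ℝ (Fin n → ℝ) (Pi.single q 1))) (fderiv ℝ X y) := by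
      funext y; rw [hA]; rfl
    rw [h1]
    exact (ContinuousLinearMap.hasFDerivAt _).comp x hFd.hasFDerivAt
  have hder : ∀ j : Fin n, HasFDerivAt (fun y => sigmaDeriv n k (A y) i j)
      (∑ s ∈ Finset.univ.powersetCard k,
        if h : i ∈ s then
          (∑ p' : {x : Fin n // x ∈ s},
            ((detCML _).toContinuousLinearMap
                (Function.update (subRow s (A x)) ⟨i, h⟩ (eRow s j)) p').comp
              (if p' = ⟨i, h⟩ then 0 else ContinuousLinearMap.pi fun q => L p'.1 q.1))
        else 0) x := by
    intro j
    have hfun : (fun y => sigmaDeriv n k (A y) i j)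
        = fun y => ∑ s ∈ Finset.univ.powersetCard k,
            if h : i ∈ s then detCML _ (Function.update (subRow s (A y)) ⟨i, h⟩ (eRow s j))
            else 0 := funext fun y => sigmaDeriv_eq k (A y) i j
    rw [hfun]
    refine HasFDerivAt.fun_sum fun s _ => ?_
    by_cases h : i ∈ s
    · simp only [dif_pos h]
      exact hasFDerivAt_term s i j h A x L hL
    · simp only [dif_neg h]
      exact hasFDerivAt_const _ _
  have hval : ∀ j : Fin n, fderiv ℝ (fun y => sigmaDeriv n k (A y) i j) x (Pi.single j 1)
      = ∑ s ∈ Finset.univ.powersetCard k,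
          if h : i ∈ s then
            ∑ p' : {x : Fin n // x ∈ s},
              detCML _ (Function.update
                (Function.update (subRow s (A x)) ⟨i, h⟩ (eRow s j)) p'
                (if p' = ⟨i, h⟩ then 0
                 else fun q => B (Pi.single j 1) (Pi.single q.1 1) p'.1))
          else 0 := by
    intro j
    rw [(hder j).fderiv, ContinuousLinearMap.sum_apply]
    refine Finset.sum_congr rfl fun s _ => ?_
    by_cases h : i ∈ s
    · rw [dif_pos h, dif_pos h]
      rw [value_term s i j h A x L (Pi.single j 1)]
      rfl
    · rw [dif_neg h, dif_neg h]; rfl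
  rw [Finset.sum_congr rfl fun j (_ : j ∈ Finset.univ) => hval j]
  rw [Finset.sum_comm]
  refine Finset.sum_eq_zero fun s _ => ?_
  by_cases h : i ∈ s
  · simp only [dif_pos h]
    rw [Finset.sum_comm]
    refine Finset.sum_eq_zero fun p' _ => ?_
    rcases eq_or_ne p' ⟨i, h⟩ with rfl | hp'
    · refine Finset.sum_eq_zero fun j _ => ?_
      rw [if_pos rfl]
      exact (detCML _).toMultilinearMap.map_coord_zero ⟨i, h⟩ (Function.update_self _ _ _)
    · simp only [if_neg hp']
      exact cancel s (subRow s (A x)) ⟨i, h⟩ p' hp'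
        (fun q j => B (Pi.single j 1) (Pi.single q 1) p'.1)
        (fun b c => congrFun (hsym (Pi.single c 1) (Pi.single b 1)) p'.1)
  · simp only [dif_neg h]
    exact Finset.sum_eq_zero fun j _ => rfl
end

section
/- Let λ ∈ Γ_k = {λ ∈ ℝⁿ : σ_l(λ) ≥ 0 for l = 1,…,k} and let D = diag(λ₁,…,λₙ). Then the matrix (∂σ_k/∂a_{ij})(D), i.e., the matrix of partial derivatives of σ_k evaluated at the diagonal matrix D, is positive semidefinite (it is the diagonal matrix with entries σ_{k−1}(λ | i), the (k−1)-th elementary symmetric polynomial of λ with λ_i omitted, and each such entry is nonnegative). -/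
open Finset Polynomial

noncomputable def esymF {ι : Type*} (A : Finset ι) (f : ι → ℝ) (k : ℕ) : ℝ :=
  ∑ s ∈ A.powersetCard k, ∏ i ∈ s, f i

lemma esymF_def {ι : Type*} (A : Finset ι) (f : ι → ℝ) (k : ℕ) :
    esymF A f k = ∑ s ∈ A.powersetCard k, ∏ i ∈ s, f i := rfl

@[simp] lemma esymF_zero {ι : Type*} (A : Finset ι) (f : ι → ℝ) : esymF A f 0 = 1 := by
  simp [esymF]

lemma esymF_of_card_lt {ι : Type*} {A : Finset ι} {f : ι → ℝ} {k : ℕ} (h : A.card < k) :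
    esymF A f k = 0 := by
  simp [esymF, Finset.powersetCard_eq_empty.2 h]

lemma esymF_insert {ι : Type*} [DecidableEq ι] {A : Finset ι} {x : ι} (hx : x ∉ A)
    (f : ι → ℝ) (k : ℕ) :
    esymF (insert x A) f (k + 1) = esymF A f (k + 1) + f x * esymF A f k := by
  unfold esymF
  rw [Finset.powersetCard_succ_insert hx, Finset.sum_union, Finset.sum_image]
  · rw [Finset.mul_sum]
    congr 1
    refine Finset.sum_congr rfl fun s hs => ?_
    rw [Finset.mem_powersetCard] at hs
    exact Finset.prod_insert (fun hxs => hx (hs.1 hxs))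
  · intro s hs t ht hst
    rw [Finset.mem_coe, Finset.mem_powersetCard] at hs ht
    have h1 : x ∉ s := fun h => hx (hs.1 h)
    have h2 : x ∉ t := fun h => hx (ht.1 h)
    rw [← Finset.erase_insert h1, ← Finset.erase_insert h2, hst]
  · rw [Finset.disjoint_right]
    rintro s hs hs'
    rw [Finset.mem_image] at hs
    obtain ⟨t, _, rfl⟩ := hs
    rw [Finset.mem_powersetCard] at hs'
    exact hx (hs'.1 (Finset.mem_insert_self x t))

lemma esymF_erase {ι : Type*} [DecidableEq ι] {A : Finset ι} {x : ι} (hx : x ∈ A)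
    (f : ι → ℝ) (k : ℕ) :
    esymF A f (k + 1) = esymF (A.erase x) f (k + 1) + f x * esymF (A.erase x) f k := by
  conv_lhs => rw [← Finset.insert_erase hx]
  exact esymF_insert (Finset.notMem_erase x A) f k

lemma esymF_one {ι : Type*} [DecidableEq ι] (A : Finset ι) (f : ι → ℝ) :
    esymF A f 1 = ∑ i ∈ A, f i := by
  induction A using Finset.induction with
  | empty => rw [show esymF (∅ : Finset ι) f _ = 0 from esymF_of_card_lt (by simp)]; simp
  | insert _ _ hx ih => rw [esymF_insert hx, ih, Finset.sum_insert hx, esymF_zero]; ring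

lemma sq_sum_eq {ι : Type*} [DecidableEq ι] (A : Finset ι) (f : ι → ℝ) :
    (∑ i ∈ A, f i) ^ 2 = ∑ i ∈ A, f i ^ 2 + 2 * esymF A f 2 := by
  induction A using Finset.induction with
  | empty => rw [show esymF (∅ : Finset ι) f _ = 0 from esymF_of_card_lt (by simp)]; simp
  | @insert x B hx ih =>
      rw [Finset.sum_insert hx, Finset.sum_insert hx,
        show (2 : ℕ) = 1 + 1 from rfl, esymF_insert hx, esymF_one, add_sq, ih]
      ring

lemma sum_powersetCard_compl {ι : Type*} [DecidableEq ι] (A : Finset ι) (r : ℕ)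
    (hr : r ≤ A.card) (F : Finset ι → ℝ) :
    ∑ s ∈ A.powersetCard r, F s = ∑ p ∈ A.powersetCard (A.card - r), F (A \ p) := by
  refine Finset.sum_nbij' (fun s => A \ s) (fun p => A \ p) ?_ ?_ ?_ ?_ ?_
  · intro s hs
    rw [Finset.mem_powersetCard] at hs ⊢
    exact ⟨Finset.sdiff_subset, by rw [Finset.card_sdiff_of_subset hs.1, hs.2]⟩
  · intro p hp
    rw [Finset.mem_powersetCard] at hp ⊢
    refine ⟨Finset.sdiff_subset, ?_⟩
    rw [Finset.card_sdiff_of_subset hp.1, hp.2, Nat.sub_sub_self hr]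
  · intro s hs
    rw [Finset.mem_powersetCard] at hs
    exact Finset.sdiff_sdiff_eq_self hs.1
  · intro p hp
    rw [Finset.mem_powersetCard] at hp
    exact Finset.sdiff_sdiff_eq_self hp.1
  · intro s hs
    rw [Finset.mem_powersetCard] at hs
    rw [Finset.sdiff_sdiff_eq_self hs.1]

/-- second-highest esymm as a sum of "leave one out" products -/
lemma esymF_pred {ι : Type*} [DecidableEq ι] (A : Finset ι) (g : ι → ℝ) {j : ℕ}
    (hA : A.card = j + 1) :
    esymF A g j = ∑ i ∈ A, ∏ t ∈ A.erase i, g t := by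
  rw [esymF_def, sum_powersetCard_compl A j (by omega),
    show A.card - j = 1 by omega, Finset.powersetCard_one, Finset.sum_map]
  refine Finset.sum_congr rfl fun i hi => ?_
  congr 1
  simp [Finset.sdiff_singleton_eq_erase]

lemma prod_pair_eq {ι : Type*} [DecidableEq ι] (A : Finset ι) (g : ι → ℝ) {p : Finset ι}
    (hpA : p ⊆ A) (hp2 : p.card = 2) :
    ∏ i ∈ p, (∏ t ∈ A.erase i, g t) = (∏ i ∈ A, g i) * ∏ i ∈ A \ p, g i := by
  obtain ⟨x, y, hxy, rfl⟩ := Finset.card_eq_two.1 hp2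
  have hxA : x ∈ A := hpA (by simp)
  have hyA : y ∈ A := hpA (by simp)
  have hyx : y ∈ A.erase x := Finset.mem_erase.2 ⟨Ne.symm hxy, hyA⟩
  have hxy' : x ∈ A.erase y := Finset.mem_erase.2 ⟨hxy, hxA⟩
  have hdiff : A \ {x, y} = (A.erase x).erase y := by
    ext a; simp [Finset.mem_erase, Finset.mem_sdiff]; tauto
  have h1 : ∏ t ∈ A.erase x, g t = g y * ∏ t ∈ (A.erase x).erase y, g t :=
    (Finset.mul_prod_erase _ _ hyx).symm
  have h2 : ∏ t ∈ A.erase y, g t = g x * ∏ t ∈ (A.erase y).erase x, g t :=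
    (Finset.mul_prod_erase _ _ hxy').symm
  have h3 : ∏ i ∈ A, g i = g x * ∏ t ∈ A.erase x, g t := (Finset.mul_prod_erase _ _ hxA).symm
  have h4 : (A.erase y).erase x = (A.erase x).erase y := by
    ext a; simp [Finset.mem_erase]; tauto
  rw [Finset.prod_pair hxy, hdiff, h1, h2, h3, h4, h1]
  ring

/-- base case of Newton's inequality: `m = j + 2` variables. -/
lemma newton_base {ι : Type*} [DecidableEq ι] (A : Finset ι) (g : ι → ℝ) (j : ℕ)
    (hA : A.card = j + 2) :
    ((j + 2 : ℕ) : ℝ) ^ 2 * (esymF A g j * esymF A g (j + 2)) ≤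
      ((j + 2).choose j : ℝ) * esymF A g (j + 1) ^ 2 := by
  set a : ι → ℝ := fun i => ∏ t ∈ A.erase i, g t with ha
  have hej2 : esymF A g (j + 2) = ∏ i ∈ A, g i := by
    rw [esymF_def, ← hA, Finset.powersetCard_self, Finset.sum_singleton]
  have hej1 : esymF A g (j + 1) = ∑ i ∈ A, a i := esymF_pred A g (by omega)
  have hkey : esymF A g j * esymF A g (j + 2) = esymF A a 2 := by
    rw [hej2, esymF_def A g j, sum_powersetCard_compl A j (by omega),
      show A.card - j = 2 by omega, esymF_def, Finset.sum_mul]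
    refine Finset.sum_congr rfl fun p hp => ?_
    rw [Finset.mem_powersetCard] at hp
    rw [prod_pair_eq A g hp.1 hp.2]; ring
  have hCS : (∑ i ∈ A, a i) ^ 2 ≤ ((j + 2 : ℕ) : ℝ) * ∑ i ∈ A, a i ^ 2 := by
    have := sq_sum_le_card_mul_sum_sq (s := A) (f := a)
    rwa [hA] at this
  have hsq : (∑ i ∈ A, a i) ^ 2 = ∑ i ∈ A, a i ^ 2 + 2 * esymF A a 2 := sq_sum_eq A a
  have hchoose : ((j + 2).choose j : ℝ) * 2 = ((j + 2 : ℕ) : ℝ) * ((j + 1 : ℕ) : ℝ) := by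
    have h1 : (j + 2).choose j = (j + 2).choose 2 := by
      have h := Nat.choose_symm (show j ≤ j + 2 by omega)
      rw [show j + 2 - j = 2 by omega] at h
      exact h.symm
    have h2 : (j + 2).choose 2 * 2 = (j + 2) * (j + 1) := by
      rw [Nat.choose_succ_right_eq, Nat.choose_one_right, Nat.succ_sub_one]
    rw [h1]
    exact_mod_cast congrArg (Nat.cast : ℕ → ℝ) h2
  rw [hkey, hej1]
  set T := ∑ i ∈ A, a i
  set Q := ∑ i ∈ A, a i ^ 2
  set c : ℝ := ((j + 2 : ℕ) : ℝ)
  have hc : (0 : ℝ) < c := by positivity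
  have hc1 : ((j + 1 : ℕ) : ℝ) = c - 1 := by simp only [c]; push_cast; ring
  have h5 : c * T ^ 2 ≤ c ^ 2 * Q := by nlinarith [hCS, hc]
  have h6 : 2 * (((j + 2).choose j : ℝ) * T ^ 2) - 2 * (c ^ 2 * esymF A a 2) =
      c ^ 2 * Q - c * T ^ 2 := by
    linear_combination T ^ 2 * hchoose + c * T ^ 2 * hc1 + c ^ 2 * hsq
  linarith [h5, h6]

lemma esymF_eq_esymm {ι : Type*} (A : Finset ι) (f : ι → ℝ) (k : ℕ) :
    esymF A f k = (A.val.map f).esymm k := by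
  rw [esymF_def, Finset.esymm_map_val]

/-- the multiset of roots of the derivative: same "normalized" symmetric functions -/
lemma deriv_roots_esymm (s : Multiset ℝ) (m : ℕ) (hm : Multiset.card s = m + 1) :
    ∃ μ : Multiset ℝ, Multiset.card μ = m ∧
      ∀ l, l ≤ m → ((m + 1 : ℕ) : ℝ) * μ.esymm l = ((m + 1 - l : ℕ) : ℝ) * s.esymm l := by
  set q : Polynomial ℝ := (s.map fun a => X - C a).prod with hq
  have hmonic : q.Monic := monic_multiset_prod_of_monic _ _ fun a _ => monic_X_sub_C a
  have hdeg : q.natDegree = m + 1 := by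
    rw [hq, natDegree_multiset_prod_X_sub_C_eq_card, hm]
  have hroots : q.roots = s := roots_multiset_prod_X_sub_C s
  set q' := derivative q with hq'
  have hdeg'le : q'.natDegree ≤ m := by
    have h := natDegree_derivative_le q
    rw [← hq'] at h
    omega
  have hcardle : Multiset.card q'.roots ≤ m := (card_roots' q').trans hdeg'le
  have hcardge : m + 1 ≤ Multiset.card q'.roots + 1 := by
    have h := card_roots_le_derivative q
    rw [← hq'] at h
    rw [hroots, hm] at h
    omega
  have hcard : Multiset.card q'.roots = m := by omega
  have hdeg' : q'.natDegree = m := by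
    have h := card_roots' q'
    omega
  have hlc : q'.leadingCoeff = ((m + 1 : ℕ) : ℝ) := by
    rw [Polynomial.leadingCoeff, hdeg', hq', Polynomial.coeff_derivative]
    have h1 : q.coeff (m + 1) = 1 := by
      have h2 := Polynomial.Monic.coeff_natDegree hmonic
      rwa [hdeg] at h2
    rw [h1]
    push_cast
    ring
  have hfac : C q'.leadingCoeff * (q'.roots.map fun a => X - C a).prod = q' :=
    C_leadingCoeff_mul_prod_multiset_X_sub_C (hcard.trans hdeg'.symm)
  refine ⟨q'.roots, hcard, fun l hl => ?_⟩
  have hco : q'.coeff (m - l) = q.coeff (m - l + 1) * ((m - l + 1 : ℕ) : ℝ) := by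
    rw [hq', Polynomial.coeff_derivative]
    push_cast
    ring
  have hv1 : q.coeff (m - l + 1) = (-1) ^ l * s.esymm l := by
    have h1 : m - l + 1 ≤ Multiset.card s := by omega
    rw [hq, Multiset.prod_X_sub_C_coeff s h1, hm, show m + 1 - (m - l + 1) = l by omega]
  have hv2 : q'.coeff (m - l) =
      ((m + 1 : ℕ) : ℝ) * ((-1) ^ l * (q'.roots).esymm l) := by
    conv_lhs => rw [← hfac]
    rw [hlc, Polynomial.coeff_C_mul,
      Multiset.prod_X_sub_C_coeff q'.roots (by omega : m - l ≤ Multiset.card q'.roots),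
      hcard, show m - (m - l) = l by omega]
  have hml : (m - l + 1 : ℕ) = (m + 1 - l : ℕ) := by omega
  have hpow : ((-1 : ℝ)) ^ l * (-1 : ℝ) ^ l = 1 := by
    rw [← pow_add]
    exact (neg_one_pow_eq_one_iff_even (by norm_num)).2 (by exact Even.add_self l)
  have := hv2.symm.trans (hco.trans (by rw [hv1]))
  have h2 := congrArg (fun x => (-1 : ℝ) ^ l * x) this
  rw [← hml]
  nlinarith [h2, hpow]

lemma choose_logconcave_strict {m j : ℕ} (h : j + 2 ≤ m) :
    m.choose j * m.choose (j + 2) < m.choose (j + 1) ^ 2 := by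
  have k1 := Nat.choose_succ_right_eq m j
  have k2 := Nat.choose_succ_right_eq m (j + 1)
  -- C(m,j+1)*(j+1) = C(m,j)*(m-j),  C(m,j+2)*(j+2) = C(m,j+1)*(m-j-1)
  have hpos : 0 < m.choose (j + 1) := Nat.choose_pos (by omega)
  have key : m.choose j * m.choose (j + 2) * ((m - j) * (j + 2)) =
      m.choose (j + 1) ^ 2 * ((j + 1) * (m - (j + 1))) := by
    calc m.choose j * m.choose (j + 2) * ((m - j) * (j + 2))
        = (m.choose j * (m - j)) * (m.choose (j + 2) * (j + 2)) := by ring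
      _ = (m.choose (j + 1) * (j + 1)) * (m.choose (j + 1) * (m - (j + 1))) := by
          rw [← k1, ← k2]
      _ = m.choose (j + 1) ^ 2 * ((j + 1) * (m - (j + 1))) := by ring
  have hlt : (j + 1) * (m - (j + 1)) < (m - j) * (j + 2) := by
    calc (j + 1) * (m - (j + 1)) ≤ (j + 1) * (m - j) :=
          mul_le_mul_of_nonneg_left (by omega) (by omega)
      _ < (j + 2) * (m - j) := mul_lt_mul_of_pos_right (by omega) (by omega)
      _ = (m - j) * (j + 2) := mul_comm _ _
  have hfin : m.choose j * m.choose (j + 2) * ((m - j) * (j + 2)) <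
      m.choose (j + 1) ^ 2 * ((m - j) * (j + 2)) := by
    rw [key]
    exact mul_lt_mul_of_pos_left hlt (pow_pos hpos 2)
  exact Nat.lt_of_mul_lt_mul_right hfin

theorem newton_multiset (j : ℕ) : ∀ m : ℕ, j + 2 ≤ m → ∀ s : Multiset ℝ,
    Multiset.card s = m →
    (m.choose (j + 1) : ℝ) ^ 2 * (s.esymm j * s.esymm (j + 2)) ≤
      ((m.choose j : ℝ) * (m.choose (j + 2) : ℝ)) * s.esymm (j + 1) ^ 2 := by
  intro m hm
  induction m, hm using Nat.le_induction with
  | base =>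
      intro s hcard
      -- convert to a `Fin`-indexed picture
      obtain ⟨l, rfl⟩ : ∃ l : List ℝ, (l : Multiset ℝ) = s := ⟨s.toList, Multiset.coe_toList s⟩
      have hlen : l.length = j + 2 := by rwa [Multiset.coe_card] at hcard
      have hes : ∀ k : ℕ, (l : Multiset ℝ).esymm k = esymF (Finset.univ : Finset (Fin l.length)) l.get k := by
        intro k
        rw [esymF_eq_esymm]
        congr 1
        rw [Fin.univ_val_map, List.ofFn_get]
      have hcardA : (Finset.univ : Finset (Fin l.length)).card = j + 2 := by
        simp [hlen]
      have hb := newton_base (Finset.univ : Finset (Fin l.length)) l.get j hcardA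
      rw [hes j, hes (j + 1), hes (j + 2)]
      have hc1 : (j + 2).choose (j + 1) = j + 2 := by
        have h := Nat.choose_symm (show j + 1 ≤ j + 2 by omega)
        rw [show j + 2 - (j + 1) = 1 by omega, Nat.choose_one_right] at h
        exact h.symm
      have hc2 : (j + 2).choose (j + 2) = 1 := Nat.choose_self _
      rw [hc1, hc2]
      push_cast
      push_cast at hb
      linarith [hb]
  | succ m hm ih =>
      intro s hcard
      obtain ⟨μ, hμcard, hμ⟩ := deriv_roots_esymm s m hcard
      have ihμ := ih μ hμcard
      -- abbreviations
      set c : ℝ := ((m + 1 : ℕ) : ℝ) with hc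
      have hcpos : (0 : ℝ) < c := by positivity
      have hb : ∀ l : ℕ, l ≤ m → ((m + 1 - l : ℕ) : ℝ) * ((m + 1).choose l : ℝ) =
          c * (m.choose l : ℝ) := by
        intro l hl
        have h1 : (m + 1).choose (l + 1) * (l + 1) = (m + 1).choose l * (m + 1 - l) :=
          Nat.choose_succ_right_eq (m + 1) l
        have h2 : (m + 1) * m.choose l = (m + 1).choose (l + 1) * (l + 1) :=
          Nat.add_one_mul_choose_eq m l
        have h3 : (m + 1 - l) * ((m + 1).choose l) = (m + 1) * m.choose l := by
          calc (m + 1 - l) * ((m + 1).choose l) = (m + 1).choose l * (m + 1 - l) :=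
                mul_comm _ _
            _ = (m + 1).choose (l + 1) * (l + 1) := h1.symm
            _ = (m + 1) * m.choose l := h2.symm
        rw [hc]
        exact_mod_cast congrArg (Nat.cast : ℕ → ℝ) h3
      -- express esymm μ and choose m in fraction form
      have he : ∀ l : ℕ, l ≤ m → μ.esymm l = ((m + 1 - l : ℕ) : ℝ) * s.esymm l / c := by
        intro l hl
        rw [eq_div_iff hcpos.ne']
        have := hμ l hl
        linarith
      have hbb : ∀ l : ℕ, l ≤ m → (m.choose l : ℝ) =
          ((m + 1 - l : ℕ) : ℝ) * (((m + 1).choose l : ℝ)) / c := by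
        intro l hl
        rw [eq_div_iff hcpos.ne']
        linarith [hb l hl]
      rw [he j (by omega), he (j + 1) (by omega), he (j + 2) (by omega),
        hbb j (by omega), hbb (j + 1) (by omega), hbb (j + 2) (by omega)] at ihμ
      set cj : ℝ := ((m + 1 - j : ℕ) : ℝ) with hcj
      set cj1 : ℝ := ((m + 1 - (j + 1) : ℕ) : ℝ) with hcj1
      set cj2 : ℝ := ((m + 1 - (j + 2) : ℕ) : ℝ) with hcj2
      have hcjpos : (0 : ℝ) < cj := by rw [hcj]; exact_mod_cast Nat.sub_pos_of_lt (by omega)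
      have hcj1pos : (0 : ℝ) < cj1 := by rw [hcj1]; exact_mod_cast Nat.sub_pos_of_lt (by omega)
      have hcj2pos : (0 : ℝ) < cj2 := by rw [hcj2]; exact_mod_cast Nat.sub_pos_of_lt (by omega)
      set K : ℝ := cj1 ^ 2 * cj * cj2 / c ^ 4 with hK
      have hKpos : (0 : ℝ) < K := by
        rw [hK]
        exact div_pos (mul_pos (mul_pos (pow_pos hcj1pos 2) hcjpos) hcj2pos) (by positivity)
      have eqL : (((m + 1).choose (j + 1) : ℝ) ^ 2 * (s.esymm j * s.esymm (j + 2))) * K =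
          (cj1 * (((m + 1).choose (j + 1) : ℝ)) / c) ^ 2 *
            (cj * s.esymm j / c * (cj2 * s.esymm (j + 2) / c)) := by
        rw [hK]; field_simp
      have eqR : ((((m + 1).choose j : ℝ) * (((m + 1).choose (j + 2)) : ℝ)) *
            s.esymm (j + 1) ^ 2) * K =
          cj * (((m + 1).choose j : ℝ)) / c * (cj2 * (((m + 1).choose (j + 2)) : ℝ) / c) *
            (cj1 * s.esymm (j + 1) / c) ^ 2 := by
        rw [hK]; field_simp
      rw [← eqL, ← eqR] at ihμ
      exact le_of_mul_le_mul_right ihμ hKpos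

lemma gamma_nonpos {ι : Type*} [DecidableEq ι] {A : Finset ι} {f : ι → ℝ} {i : ι}
    (hi : i ∈ A) (hfi : f i ≤ 0) :
    ∀ r : ℕ, (∀ l, l ≤ r → 0 ≤ esymF A f l) → 0 ≤ esymF (A.erase i) f r := by
  intro r
  induction r with
  | zero => intro _; rw [esymF_zero]; norm_num
  | succ r ih =>
      intro h
      have hE : 0 ≤ esymF (A.erase i) f r := ih fun l hl => h l (by omega)
      have hS : 0 ≤ esymF A f (r + 1) := h (r + 1) le_rfl
      have hrec := esymF_erase hi f r
      nlinarith [mul_nonpos_of_nonpos_of_nonneg hfi hE]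

theorem gamma_lemma {ι : Type*} [DecidableEq ι] : ∀ (k : ℕ) (A : Finset ι) (f : ι → ℝ)
    (i : ι), i ∈ A → k + 1 ≤ A.card → (∀ l, l ≤ k + 1 → 0 ≤ esymF A f l) →
    0 ≤ esymF (A.erase i) f k := by
  intro k
  induction k using Nat.strong_induction_on with
  | _ k IH =>
    intro A f i hi hcard hΓ
    match k with
    | 0 => rw [esymF_zero]; norm_num
    | (k' + 1) =>
      by_cases hfi : f i ≤ 0
      · exact gamma_nonpos hi hfi (k' + 1) fun l hl => hΓ l (by omega)
      push_neg at hfi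
      by_contra hneg
      push_neg at hneg
      have hE0 : 0 ≤ esymF (A.erase i) f k' :=
        IH k' (by omega) A f i hi (by omega) fun l hl => hΓ l (by omega)
      have hrec1 := esymF_erase hi f k'
      have hrec2 := esymF_erase hi f (k' + 1)
      have hS1 : 0 ≤ esymF A f (k' + 1) := hΓ (k' + 1) (by omega)
      have hS2 : 0 ≤ esymF A f (k' + 2) := hΓ (k' + 2) (by omega)
      set E0 := esymF (A.erase i) f k' with hE0def
      set E1 := esymF (A.erase i) f (k' + 1) with hE1def
      set E2 := esymF (A.erase i) f (k' + 2) with hE2def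
      have hfE0 : f i * E0 ≥ -E1 := by linarith
      have hE2ge : E2 ≥ f i * (-E1) := by nlinarith
      have hE2pos : 0 < E2 := by nlinarith
      -- rule out the case `A.card = k' + 2`
      have hcardA : k' + 3 ≤ A.card := by
        rcases Nat.lt_or_ge A.card (k' + 3) with h | h
        · exfalso
          have : (A.erase i).card < k' + 2 := by
            rw [Finset.card_erase_of_mem hi]; omega
          rw [hE2def, esymF_of_card_lt this] at hE2pos
          exact lt_irrefl 0 hE2pos
        · exact h
      set m := (A.erase i).card with hm
      have hmk : k' + 2 ≤ m := by rw [hm, Finset.card_erase_of_mem hi]; omega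
      have hmulti : Multiset.card ((A.erase i).val.map f) = m := by
        rw [Multiset.card_map]; rfl
      have hnew := newton_multiset k' m hmk ((A.erase i).val.map f) hmulti
      rw [← esymF_eq_esymm, ← esymF_eq_esymm, ← esymF_eq_esymm, ← hE0def, ← hE1def, ← hE2def] at hnew
      have hchain : E1 ^ 2 ≤ E0 * E2 := by nlinarith
      have hcs : ((m.choose k' : ℝ) * (m.choose (k' + 2) : ℝ)) < (m.choose (k' + 1) : ℝ) ^ 2 := by
        exact_mod_cast choose_logconcave_strict hmk
      have hsqpos : 0 < E1 ^ 2 := by nlinarith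
      have h1 : (m.choose (k' + 1) : ℝ) ^ 2 * E1 ^ 2 ≤
          (m.choose (k' + 1) : ℝ) ^ 2 * (E0 * E2) :=
        mul_le_mul_of_nonneg_left hchain (by positivity)
      have h3 : ((m.choose k' : ℝ) * (m.choose (k' + 2) : ℝ)) * E1 ^ 2 <
          (m.choose (k' + 1) : ℝ) ^ 2 * E1 ^ 2 :=
        mul_lt_mul_of_pos_right hcs hsqpos
      linarith

lemma det_submatrix_diagonal {n : ℕ} (d : Fin n → ℝ) (s : Finset (Fin n)) :
    ((Matrix.diagonal d).submatrix (fun i : {x : Fin n // x ∈ s} => i.1)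
      (fun j : {x : Fin n // x ∈ s} => j.1)).det = ∏ a ∈ s, d a := by
  have h : (Matrix.diagonal d).submatrix (fun i : {x : Fin n // x ∈ s} => i.1)
      (fun j : {x : Fin n // x ∈ s} => j.1) =
      Matrix.diagonal (fun i : {x : Fin n // x ∈ s} => d i.1) := by
    ext a b
    by_cases hab : a = b
    · subst hab; simp [Matrix.diagonal_apply]
    · have : a.1 ≠ b.1 := fun h' => hab (Subtype.ext h')
      simp [Matrix.diagonal_apply, hab, this]
  rw [h, Matrix.det_diagonal]
  exact Finset.prod_coe_sort s (fun a => d a)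

lemma sigmaMat_diagonal {n : ℕ} (lam : Fin n → ℝ) (k : ℕ) :
    sigmaMat n k (Matrix.diagonal lam) = esymF Finset.univ lam k := by
  rw [sigmaMat, esymF_def]
  exact Finset.sum_congr rfl fun s _ => det_submatrix_diagonal lam s

lemma det_submatrix_offdiag {n : ℕ} (d : Fin n → ℝ) (t : ℝ) {i j : Fin n} (hij : i ≠ j)
    (s : Finset (Fin n)) :
    (((Matrix.diagonal d + t • Matrix.single i j 1)).submatrix
      (fun a : {x : Fin n // x ∈ s} => a.1) (fun b : {x : Fin n // x ∈ s} => b.1)).det =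
      ∏ a ∈ s, d a := by
  set N := ((Matrix.diagonal d + t • Matrix.single i j 1)).submatrix
      (fun a : {x : Fin n // x ∈ s} => a.1) (fun b : {x : Fin n // x ∈ s} => b.1) with hN
  have hentry : ∀ a b : {x : Fin n // x ∈ s},
      N a b = (if a = b then d a.1 else 0) + (if i = a.1 ∧ j = b.1 then t else 0) := by
    intro a b
    rw [hN]
    by_cases hab : a = b
    · subst hab
      simp [Matrix.diagonal_apply, Matrix.single, Matrix.add_apply, mul_ite]
    · have h1 : a.1 ≠ b.1 := fun h' => hab (Subtype.ext h')
      simp [Matrix.diagonal_apply, Matrix.single, Matrix.add_apply, hab, h1, mul_ite]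
  have hdiagN : ∀ a : {x : Fin n // x ∈ s}, N a a = d a.1 := by
    intro a
    rw [hentry a a]
    have : ¬(i = a.1 ∧ j = a.1) := fun ⟨h1, h2⟩ => hij (h1.trans h2.symm)
    simp [this]
  have hdet : N.det = ∏ a : {x : Fin n // x ∈ s}, d a.1 := by
    rcases lt_or_gt_of_ne hij with h | h
    · -- i < j : lower-left entries vanish
      have htri : N.BlockTriangular id := by
        intro a b hab
        simp only [id_eq] at hab
        rw [hentry a b]
        have h1 : a ≠ b := fun h' => absurd (h' ▸ hab) (lt_irrefl _)
        have h2 : ¬(i = a.1 ∧ j = b.1) := by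
          rintro ⟨ha, hb⟩
          have : (a : Fin n) < (b : Fin n) := ha ▸ hb ▸ h
          have hba : (b : Fin n) < (a : Fin n) := Subtype.coe_lt_coe.2 hab
          exact absurd (this.trans hba) (lt_irrefl _)
        simp [h1, h2]
      rw [Matrix.det_of_upperTriangular htri]
      exact Finset.prod_congr rfl fun a _ => hdiagN a
    · -- j < i : upper-right entries vanish
      have htri : N.BlockTriangular OrderDual.toDual := by
        intro a b hab
        have hab' : a < b := hab
        rw [hentry a b]
        have h1 : a ≠ b := fun h' => absurd (h' ▸ hab') (lt_irrefl _)
        have h2 : ¬(i = a.1 ∧ j = b.1) := by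
          rintro ⟨ha, hb⟩
          have : (b : Fin n) < (a : Fin n) := hb ▸ ha ▸ h
          have hba : (a : Fin n) < (b : Fin n) := Subtype.coe_lt_coe.2 hab'
          exact absurd (this.trans hba) (lt_irrefl _)
        simp [h1, h2]
      rw [Matrix.det_of_lowerTriangular N htri]
      exact Finset.prod_congr rfl fun a _ => hdiagN a
  rw [hdet]
  exact Finset.prod_coe_sort s (fun a => d a)

lemma sigmaMat_offdiag_const {n k : ℕ} (lam : Fin n → ℝ) {i j : Fin n} (hij : i ≠ j) (t : ℝ) :
    sigmaMat n k (Matrix.diagonal lam + t • Matrix.single i j 1) =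
      esymF Finset.univ lam k := by
  rw [sigmaMat, esymF_def]
  exact Finset.sum_congr rfl fun s _ => det_submatrix_offdiag lam t hij s

lemma sigmaDeriv_offdiag {n k : ℕ} (lam : Fin n → ℝ) {i j : Fin n} (hij : i ≠ j) :
    sigmaDeriv n k (Matrix.diagonal lam) i j = 0 := by
  rw [sigmaDeriv]
  have hconst : (fun t : ℝ => sigmaMat n k (Matrix.diagonal lam + t • Matrix.single i j 1))
      = fun _ : ℝ => esymF Finset.univ lam k := funext fun t => sigmaMat_offdiag_const lam hij t
  rw [hconst]
  exact deriv_const _ _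

lemma diag_add_std {n : ℕ} (lam : Fin n → ℝ) (i : Fin n) (t : ℝ) :
    Matrix.diagonal lam + t • Matrix.single i i 1 =
      Matrix.diagonal (Function.update lam i (lam i + t)) := by
  ext a b
  by_cases hab : a = b
  · subst hab
    by_cases hai : a = i
    · subst hai
      simp [Matrix.add_apply, Matrix.diagonal_apply, Matrix.single,
        Function.update_self]
    · have h3 : i ≠ a := fun h => hai h.symm
      simp [Matrix.add_apply, Matrix.diagonal_apply, Matrix.single,
        Function.update_of_ne hai, h3]
  · have h2 : ¬(i = a ∧ i = b) := fun ⟨h1, h2⟩ => hab (h1 ▸ h2)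
    simp [Matrix.add_apply, Matrix.diagonal_apply, Matrix.single, hab, h2]

lemma esymF_update {ι : Type*} [DecidableEq ι] {A : Finset ι} {i : ι} (hiA : i ∉ A)
    (f : ι → ℝ) (c : ℝ) (r : ℕ) :
    esymF A (Function.update f i c) r = esymF A f r := by
  rw [esymF_def, esymF_def]
  refine Finset.sum_congr rfl fun s hs => Finset.prod_congr rfl fun a ha => ?_
  have hne : a ≠ i := fun h => hiA (h ▸ (Finset.mem_powersetCard.1 hs).1 ha)
  exact Function.update_of_ne hne c f

lemma sigmaDeriv_diag {n k' : ℕ} (lam : Fin n → ℝ) (i : Fin n) :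
    sigmaDeriv n (k' + 1) (Matrix.diagonal lam) i i =
      esymF (Finset.univ.erase i) lam k' := by
  rw [sigmaDeriv]
  have hfun : (fun t : ℝ =>
      sigmaMat n (k' + 1) (Matrix.diagonal lam + t • Matrix.single i i 1)) =
      fun t : ℝ => esymF (Finset.univ.erase i) lam (k' + 1) +
        (lam i + t) * esymF (Finset.univ.erase i) lam k' := by
    funext t
    rw [diag_add_std, sigmaMat_diagonal, esymF_erase (Finset.mem_univ i),
      esymF_update (Finset.notMem_erase i Finset.univ),
      esymF_update (Finset.notMem_erase i Finset.univ), Function.update_self]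
  rw [hfun]
  have hd : HasDerivAt (fun t : ℝ => esymF (Finset.univ.erase i) lam (k' + 1) +
      (lam i + t) * esymF (Finset.univ.erase i) lam k')
      (esymF (Finset.univ.erase i) lam k') 0 := by
    simpa using (((hasDerivAt_id (0 : ℝ)).const_add (lam i)).mul_const
      (esymF (Finset.univ.erase i) lam k')).const_add
      (esymF (Finset.univ.erase i) lam (k' + 1))
  exact hd.deriv

/-- if `λ ∈ Γ_k` and `D = diag(λ)`, then the matrix `(∂σ_k/∂a_{ij})(D)` is
positive semidefinite: it is diagonal with entries `σ_{k−1}(λ|i) ≥ 0`. -/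
theorem stmt9 (n k : ℕ) (hk : 1 ≤ k) (hkn : k ≤ n) (lam : Fin n → ℝ)
    (hΓ : ∀ l, 1 ≤ l → l ≤ k → 0 ≤ sigmaMat n l (Matrix.diagonal lam))
    (M : Matrix (Fin n) (Fin n) ℝ)
    (hM : ∀ i j, M i j = sigmaDeriv n k (Matrix.diagonal lam) i j) :
    M.PosSemidef ∧ (∀ i j, i ≠ j → M i j = 0) ∧
      (∀ i, M i i = ∑ s ∈ (Finset.univ.erase i).powersetCard (k - 1), ∏ l ∈ s, lam l) ∧
      ∀ i, 0 ≤ M i i := by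
  obtain ⟨k', rfl⟩ : ∃ k', k = k' + 1 := ⟨k - 1, by omega⟩
  have hGam : ∀ l, l ≤ k' + 1 → 0 ≤ esymF (Finset.univ : Finset (Fin n)) lam l := by
    intro l hl
    match l with
    | 0 => rw [esymF_zero]; norm_num
    | (l' + 1) =>
        rw [← sigmaMat_diagonal]
        exact hΓ (l' + 1) (by omega) hl
  have hpos : ∀ i : Fin n, 0 ≤ esymF (Finset.univ.erase i) lam k' := by
    intro i
    refine gamma_lemma k' Finset.univ lam i (Finset.mem_univ i) ?_ hGam
    rw [Finset.card_univ, Fintype.card_fin]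
    omega
  have hdiag : ∀ i, M i i = esymF (Finset.univ.erase i) lam k' := fun i =>
    (hM i i).trans (sigmaDeriv_diag lam i)
  have hoff : ∀ i j, i ≠ j → M i j = 0 := fun i j h =>
    (hM i j).trans (sigmaDeriv_offdiag lam h)
  have hMeq : M = Matrix.diagonal (fun i => M i i) := by
    ext a b
    by_cases hab : a = b
    · subst hab; simp [Matrix.diagonal_apply]
    · rw [Matrix.diagonal_apply_ne _ hab]
      exact hoff a b hab
  refine ⟨?_, hoff, ?_, ?_⟩
  · rw [hMeq]
    exact Matrix.posSemidef_diagonal_iff.2 fun i => by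
      rw [hdiag i]; exact hpos i
  · intro i
    rw [hdiag i, esymF_def, show k' + 1 - 1 = k' from rfl]
  · intro i
    rw [hdiag i]
    exact hpos i
end

section
/- Let u ∈ C¹(Ω) on an open set Ω ⊆ ℝⁿ with |Du|^{p−2}Du ∈ C¹(Ω), p > 1, and let x₀ ∈ Ω with Du(x₀) ≠ 0. Then u is twice differentiable at x₀; more precisely, D²u(x₀) = B(x₀)^{−1} · D(|Du|^{p−2}Du)(x₀), where B_{ij} = |Du|^{p−2}(δ_{ij} + (p−2) u_i u_j/|Du|²). -/
open Real ContinuousLinearMap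

open Real ContinuousLinearMap

noncomputable def Dq {n : ℕ} (q : ℝ) (y₀ : EuclideanSpace ℝ (Fin n)) :
    EuclideanSpace ℝ (Fin n) →L[ℝ] EuclideanSpace ℝ (Fin n) :=
  ‖y₀‖ ^ q • ContinuousLinearMap.id ℝ _ +
    ((q * ‖y₀‖ ^ (q - 2)) • innerSL ℝ y₀).smulRight y₀

lemma Dq_apply {n : ℕ} (q : ℝ) (y₀ h : EuclideanSpace ℝ (Fin n)) :
    Dq q y₀ h = ‖y₀‖ ^ q • h + (q * ‖y₀‖ ^ (q - 2) * (inner ℝ y₀ h : ℝ)) • y₀ := by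
  simp only [Dq, ContinuousLinearMap.add_apply, ContinuousLinearMap.smul_apply,
    ContinuousLinearMap.coe_id', id_eq, ContinuousLinearMap.smulRight_apply, innerSL_apply_apply,
    smul_smul, smul_eq_mul]

lemma hasFDerivAt_rpow_smul {n : ℕ} (q : ℝ) (y₀ : EuclideanSpace ℝ (Fin n)) (h : y₀ ≠ 0) :
    HasFDerivAt (fun y => ‖y‖ ^ q • y) (Dq q y₀) y₀ := by
  have hn : (0:ℝ) < ‖y₀‖ := norm_pos_iff.mpr h
  have h1 : HasFDerivAt (fun y : EuclideanSpace ℝ (Fin n) => ‖y‖ ^ 2)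
      (2 • innerSL ℝ y₀) y₀ := by
    simpa using (hasFDerivAt_id y₀).norm_sq
  have h2 : HasDerivAt (fun t : ℝ => t ^ (q/2)) ((q/2) * (‖y₀‖^2) ^ (q/2 - 1)) (‖y₀‖^2) :=
    Real.hasDerivAt_rpow_const (Or.inl (by positivity))
  have h3 := h2.comp_hasFDerivAt y₀ h1
  have heq : (fun y : EuclideanSpace ℝ (Fin n) => (‖y‖^2 : ℝ) ^ (q/2)) =
      fun y => ‖y‖ ^ q := by
    funext y
    rw [← Real.rpow_natCast ‖y‖ 2, ← Real.rpow_mul (norm_nonneg y)]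
    push_cast
    congr 1
    ring
  simp only [Function.comp_def] at h3
  rw [heq] at h3
  have h4 : ((‖y₀‖ ^ 2 : ℝ)) ^ (q / 2 - 1) = ‖y₀‖ ^ (q - 2) := by
    rw [← Real.rpow_natCast ‖y₀‖ 2, ← Real.rpow_mul (norm_nonneg y₀)]
    push_cast
    congr 1
    ring
  have hcoef : ((q / 2 * (‖y₀‖ ^ 2) ^ (q / 2 - 1)) • 2 • (innerSL ℝ) y₀ :
      EuclideanSpace ℝ (Fin n) →L[ℝ] ℝ) = (q * ‖y₀‖ ^ (q - 2)) • innerSL ℝ y₀ := by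
    ext v
    simp only [ContinuousLinearMap.smul_apply, innerSL_apply_apply, smul_eq_mul, h4, two_smul,
      ContinuousLinearMap.add_apply]
    ring
  rw [hcoef] at h3
  exact h3.smul (hasFDerivAt_id y₀)

/-- if `u ∈ C¹(Ω)` with `|Du|^{p−2}Du ∈ C¹(Ω)` and `Du(x₀) ≠ 0`, then `u` is
twice differentiable at `x₀` and `D²u(x₀) = B(x₀)⁻¹ · D(|Du|^{p−2}Du)(x₀)`, where
`B_{ij} = |Du|^{p−2}(δ_{ij} + (p−2) u_i u_j/|Du|²)`. -/
theorem stmt15 (n : ℕ) (p : ℝ) (hp : 1 < p)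
    (Ω : Set (EuclideanSpace ℝ (Fin n))) (hΩ : IsOpen Ω)
    (u : EuclideanSpace ℝ (Fin n) → ℝ) (hu : ContDiffOn ℝ 1 u Ω)
    (V : EuclideanSpace ℝ (Fin n) → EuclideanSpace ℝ (Fin n))
    (hV : ∀ x, V x = ‖gradient u x‖ ^ (p - 2) • gradient u x)
    (hV1 : ContDiffOn ℝ 1 V Ω)
    (x₀ : EuclideanSpace ℝ (Fin n)) (hx₀ : x₀ ∈ Ω) (h0 : gradient u x₀ ≠ 0)
    (B : Matrix (Fin n) (Fin n) ℝ)
    (hB : ∀ i j, B i j = ‖gradient u x₀‖ ^ (p - 2) *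
      ((if i = j then (1 : ℝ) else 0) +
        (p - 2) * gradient u x₀ i * gradient u x₀ j / ‖gradient u x₀‖ ^ 2)) :
    DifferentiableAt ℝ (gradient u) x₀ ∧
      (Matrix.of fun i j => fderiv ℝ (gradient u) x₀ (EuclideanSpace.single j 1) i) =
        B⁻¹ * Matrix.of fun i j => fderiv ℝ V x₀ (EuclideanSpace.single j 1) i := by
  classical
  set y₀ := gradient u x₀ with hy₀
  have hnpos : (0:ℝ) < ‖y₀‖ := norm_pos_iff.mpr h0
  have hp1 : p - 1 ≠ 0 := by linarith
  have hVd : DifferentiableAt ℝ V x₀ :=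
    (hV1.contDiffAt (hΩ.mem_nhds hx₀)).differentiableAt one_ne_zero
  have hVx0 : V x₀ ≠ 0 := by
    rw [hV x₀]
    exact smul_ne_zero (Real.rpow_pos_of_pos hnpos _).ne' h0
  set q : ℝ := (2 - p) / (p - 1) with hq
  have hGV : gradient u = (fun w : EuclideanSpace ℝ (Fin n) => ‖w‖ ^ q • w) ∘ V := by
    funext x
    simp only [Function.comp_apply, hV x]
    by_cases hx : gradient u x = 0
    · simp [hx]
    · have hxp : (0:ℝ) < ‖gradient u x‖ := norm_pos_iff.mpr hx
      have hnV : ‖(‖gradient u x‖ ^ (p - 2) • gradient u x)‖ = ‖gradient u x‖ ^ (p - 1) := by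
        rw [norm_smul, Real.norm_eq_abs, abs_of_pos (Real.rpow_pos_of_pos hxp _),
          ← Real.rpow_add_one hxp.ne']
        congr 1
        ring
      rw [hnV, ← Real.rpow_mul hxp.le, smul_smul, ← Real.rpow_add hxp]
      have : (p - 1) * q + (p - 2) = 0 := by
        rw [hq, mul_div_assoc', mul_div_cancel_left₀ _ hp1]
        ring
      rw [this, Real.rpow_zero, one_smul]
  have hGd : DifferentiableAt ℝ (gradient u) x₀ := by
    rw [hGV]
    exact ((hasFDerivAt_rpow_smul q (V x₀) hVx0).differentiableAt).comp x₀ hVd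
  refine ⟨hGd, ?_⟩
  have hVF : V = (fun y : EuclideanSpace ℝ (Fin n) => ‖y‖ ^ (p - 2) • y) ∘ gradient u := by
    funext x; exact hV x
  have hFd := hasFDerivAt_rpow_smul (p - 2) y₀ h0
  have hchain : HasFDerivAt V ((Dq (p - 2) y₀).comp (fderiv ℝ (gradient u) x₀)) x₀ := by
    rw [hVF]
    exact hFd.comp x₀ hGd.hasFDerivAt
  have hDV : fderiv ℝ V x₀ = (Dq (p - 2) y₀).comp (fderiv ℝ (gradient u) x₀) :=
    hchain.fderiv
  set MDu : Matrix (Fin n) (Fin n) ℝ :=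
    Matrix.of fun i j => fderiv ℝ (gradient u) x₀ (EuclideanSpace.single j 1) i with hMDu
  set MV : Matrix (Fin n) (Fin n) ℝ :=
    Matrix.of fun i j => fderiv ℝ V x₀ (EuclideanSpace.single j 1) i with hMV
  have hs2 : (‖y₀‖ ^ 2 : ℝ) ≠ 0 := by positivity
  have hpow : ‖y₀‖ ^ (p - 2 - 2) = ‖y₀‖ ^ (p - 2) / ‖y₀‖ ^ 2 := by
    rw [← Real.rpow_natCast ‖y₀‖ 2, ← Real.rpow_sub hnpos]
    norm_num
  have hmul : MV = B * MDu := by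
    ext i j
    set w : EuclideanSpace ℝ (Fin n) := fderiv ℝ (gradient u) x₀ (EuclideanSpace.single j 1)
      with hw
    have hinner : (inner ℝ y₀ w : ℝ) = ∑ k, y₀ k * w k := by
      simp [PiLp.inner_apply, RCLike.inner_apply, mul_comm]
    have hVentry : MV i j = ‖y₀‖ ^ (p - 2) * w i +
        (p - 2) * ‖y₀‖ ^ (p - 2 - 2) * (∑ k, y₀ k * w k) * y₀ i := by
      simp only [hMV, Matrix.of_apply, hDV, ContinuousLinearMap.comp_apply, ← hw,
        Dq_apply, hinner]
      simp [PiLp.add_apply, PiLp.smul_apply, smul_eq_mul]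
    have hRHS : (∑ k, B i k * w k)
        = ‖y₀‖ ^ (p - 2) * w i
          + (p - 2) * ‖y₀‖ ^ (p - 2) / ‖y₀‖ ^ 2 * y₀ i * (∑ k, y₀ k * w k) := by
      calc ∑ k, B i k * w k
          = ∑ k, ((if i = k then (1:ℝ) else 0) * (‖y₀‖ ^ (p - 2) * w k)
              + (p - 2) * ‖y₀‖ ^ (p - 2) / ‖y₀‖ ^ 2 * y₀ i * (y₀ k * w k)) := by
            refine Finset.sum_congr rfl fun k _ => ?_
            rw [hB]
            ring
        _ = _ := by
            rw [Finset.sum_add_distrib, ← Finset.mul_sum]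
            congr 1
            simp [ite_mul]
    rw [hVentry]
    simp only [Matrix.mul_apply, hMDu, Matrix.of_apply]
    rw [show (∑ k, B i k * fderiv ℝ (gradient u) x₀ (EuclideanSpace.single j 1) k)
        = ∑ k, B i k * w k from rfl, hRHS, hpow]
    ring
  rw [hmul]
  have hdet : IsUnit B.det := by
    have hBdecomp : B = ‖y₀‖ ^ (p - 2) •
        (1 + Matrix.replicateCol Unit (fun i => (p - 2) / ‖y₀‖ ^ 2 * y₀ i)
          * Matrix.replicateRow Unit (fun j => y₀ j)) := by
      ext i j
      simp only [hB, Matrix.smul_apply, Matrix.add_apply, Matrix.one_apply, Matrix.mul_apply,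
        Matrix.replicateCol_apply, Matrix.replicateRow_apply, Finset.univ_unique, Finset.sum_singleton,
        smul_eq_mul]
      ring
    have hsum : dotProduct (fun j => y₀ j) (fun i => (p - 2) / ‖y₀‖ ^ 2 * y₀ i) = p - 2 := by
      have h5 : ∑ k, y₀ k * y₀ k = ‖y₀‖ ^ 2 := by
        rw [EuclideanSpace.norm_eq, Real.sq_sqrt (by positivity)]
        simp only [Real.norm_eq_abs, sq_abs]
        simp only [sq]
      have : dotProduct (fun j => y₀ j) (fun i => (p - 2) / ‖y₀‖ ^ 2 * y₀ i)
          = (p - 2) / ‖y₀‖ ^ 2 * ∑ k, y₀ k * y₀ k := by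
        simp only [dotProduct, Finset.mul_sum]
        exact Finset.sum_congr rfl fun k _ => by ring
      rw [this, h5]
      field_simp
    rw [hBdecomp, Matrix.det_smul, Matrix.det_one_add_replicateCol_mul_replicateRow, hsum]
    have hapos : (0:ℝ) < ‖y₀‖ ^ (p - 2) := Real.rpow_pos_of_pos hnpos _
    refine isUnit_iff_ne_zero.mpr (ne_of_gt ?_)
    have : (0:ℝ) < 1 + (p - 2) := by linarith
    positivity
  haveI : Invertible B := B.invertibleOfIsUnitDet hdet
  rw [Matrix.inv_mul_cancel_left_of_invertible]
end
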